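/- For each integer d with d ≥ -1 and d ≠ 0, the function φ(u,v) = (1/d²) u^{d+1} v^{d+1} (v^{−d} − u^{−d}) on R_{>0} × R_{>0} (polynomial when d ≥ 1) is skew-symmetric (φ(u,v) = −φ(v,u)) and solves the one-dimensional classical Yang–Baxter equation: φ(u,v)[∂_u φ(w,u) + ∂_v φ(w,v)] + φ(v,w)[∂_v φ(u,v) + ∂_w φ(u,w)] + φ(w,u)[∂_w φ(v,w) + ∂_u φ(v,u)] = 0. -/
import Mathlib


/-- Partial derivative with respect to the second argument. -/
noncomputable def D2 (f : ℝ → ℝ → ℝ) (a b : ℝ) : ℝ := deriv (fun y => f a y) b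

/-- The one-dimensional CYBE expression
`Φ(w,u,v) = φ(u,v)[∂_uφ(w,u)+∂_vφ(w,v)] + φ(v,w)[∂_vφ(u,v)+∂_wφ(u,w)]
 + φ(w,u)[∂_wφ(v,w)+∂_u φ(v,u)]`. -/
noncomputable def cybe1 (φ : ℝ → ℝ → ℝ) (u v w : ℝ) : ℝ :=
  φ u v * (D2 φ w u + D2 φ w v) + φ v w * (D2 φ u v + D2 φ u w) +
    φ w u * (D2 φ v w + D2 φ v u)

lemma phi_poly (d : ℤ) (u v : ℝ) (hu : 0 < u) (hv : 0 < v) :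
    (1 / (d : ℝ) ^ 2) * u ^ (d + 1) * v ^ (d + 1) * (v ^ (-d) - u ^ (-d)) =
      (1 / (d : ℝ) ^ 2) * (u ^ (d + 1) * v - u * v ^ (d + 1)) := by
  have h1 : v ^ (d + 1) * v ^ (-d) = v := by
    rw [← zpow_add₀ hv.ne']; simp
  have h2 : u ^ (d + 1) * u ^ (-d) = u := by
    rw [← zpow_add₀ hu.ne']; simp
  calc (1 / (d : ℝ) ^ 2) * u ^ (d + 1) * v ^ (d + 1) * (v ^ (-d) - u ^ (-d))
      = (1 / (d : ℝ) ^ 2) * (u ^ (d + 1) * (v ^ (d + 1) * v ^ (-d)) -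
          (u ^ (d + 1) * u ^ (-d)) * v ^ (d + 1)) := by ring
    _ = _ := by rw [h1, h2]

lemma D2_phi (d : ℤ) (a b : ℝ) (ha : 0 < a) (hb : 0 < b) :
    D2 (fun u v => (1 / (d : ℝ) ^ 2) * u ^ (d + 1) * v ^ (d + 1) * (v ^ (-d) - u ^ (-d))) a b =
      (1 / (d : ℝ) ^ 2) * (a ^ (d + 1) - ((d : ℝ) + 1) * a * b ^ d) := by
  have heq : (fun y => (1 / (d : ℝ) ^ 2) * a ^ (d + 1) * y ^ (d + 1) * (y ^ (-d) - a ^ (-d)))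
      =ᶠ[nhds b] (fun y => (1 / (d : ℝ) ^ 2) * (a ^ (d + 1) * y - a * y ^ (d + 1))) := by
    filter_upwards [eventually_gt_nhds hb] with y hy
    exact phi_poly d a y ha hy
  have h1 : HasDerivAt (fun y : ℝ => y ^ (d + 1)) (((d : ℝ) + 1) * b ^ d) b := by
    have := hasDerivAt_zpow (d + 1) b (Or.inl hb.ne')
    simpa using this
  have h2 : HasDerivAt (fun y : ℝ => (1 / (d : ℝ) ^ 2) * (a ^ (d + 1) * y - a * y ^ (d + 1)))
      ((1 / (d : ℝ) ^ 2) * (a ^ (d + 1) * 1 - a * (((d : ℝ) + 1) * b ^ d))) b :=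
    (((hasDerivAt_id b).const_mul (a ^ (d + 1))).sub (h1.const_mul a)).const_mul _
  rw [D2, heq.deriv_eq, h2.deriv]
  ring

/-- For `d ≥ -1`, `d ≠ 0`, the function `φ(u,v) = (1/d²) u^{d+1} v^{d+1}(v^{−d} − u^{−d})`
is skew-symmetric and solves the one-dimensional CYBE on `ℝ_{>0} × ℝ_{>0}`. -/
theorem canonical_r_matrix_W1 (d : ℤ) (hd1 : -1 ≤ d) (hd0 : d ≠ 0) :
    let φ : ℝ → ℝ → ℝ := fun u v =>
      (1 / (d : ℝ) ^ 2) * u ^ (d + 1) * v ^ (d + 1) * (v ^ (-d) - u ^ (-d))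
    (∀ u v : ℝ, 0 < u → 0 < v → φ u v = -φ v u) ∧
      (∀ u v w : ℝ, 0 < u → 0 < v → 0 < w → cybe1 φ u v w = 0) := by
  intro φ
  constructor
  · intro u v hu hv
    show (1 / (d : ℝ) ^ 2) * u ^ (d + 1) * v ^ (d + 1) * (v ^ (-d) - u ^ (-d)) = -((1 / (d : ℝ) ^ 2) * v ^ (d + 1) * u ^ (d + 1) * (u ^ (-d) - v ^ (-d)))
    rw [phi_poly d u v hu hv, phi_poly d v u hv hu]; ring
  · intro u v w hu hv hw
    have hD : ∀ a b : ℝ, 0 < a → 0 < b → D2 φ a b =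
        (1 / (d : ℝ) ^ 2) * (a ^ (d + 1) - ((d : ℝ) + 1) * a * b ^ d) :=
      fun a b ha hb => D2_phi d a b ha hb
    have hφ : ∀ a b : ℝ, 0 < a → 0 < b →
        φ a b = (1 / (d : ℝ) ^ 2) * (a ^ (d + 1) * b - a * b ^ (d + 1)) :=
      fun a b ha hb => phi_poly d a b ha hb
    rw [cybe1, hφ u v hu hv, hφ v w hv hw, hφ w u hw hu,
      hD w u hw hu, hD w v hw hv, hD u v hu hv, hD u w hu hw, hD v w hv hw, hD v u hv hu]
    have eu : u ^ (d + 1) = u ^ d * u := zpow_add_one₀ hu.ne' d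
    have ev : v ^ (d + 1) = v ^ d * v := zpow_add_one₀ hv.ne' d
    have ew : w ^ (d + 1) = w ^ d * w := zpow_add_one₀ hw.ne' d
    rw [eu, ev, ew]
    ring
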